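/- Suppose Assumptions on the splitting hold: H Hilbert, V_ℓ reflexive Banach spaces in Gelfand triples with H, operators A_ℓ^n : V_ℓ → V_ℓ* coercive (⟨A_ℓ^n v, v⟩ + λ ≥ μ|v|_{V_ℓ}^p, μ > 0) and the splitting scheme (U_ℓ^n − U^{n−1})/k + s A_ℓ^n U_ℓ^n = s f_ℓ^n with U^n = (1/s)∑_ℓ U_ℓ^n. Then the single-step energy estimate holds: ‖U_ℓ^n‖_H² − ‖U^{n−1}‖_H² + ‖U_ℓ^n − U^{n−1}‖_H² + k s μ |U_ℓ^n|_{V_ℓ}^p ≤ 2 k s c₁ ‖f_ℓ^n‖_{V_ℓ*} ‖U_ℓ^n‖_H + 2 k s c₂ ‖f_ℓ^n‖_{V_ℓ*}^q + 2 k s λ, where c₁ = c_{V_ℓ} and c₂ = c₁^q (pμ)^{1−q}/(q 2^{1−q}). -/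

import Mathlib

lemma myYoung {p q cV mu F a : ℝ} (hp : 1 < p) (hq : q = p / (p - 1))
    (hmu : 0 < mu) (hcV : 0 ≤ cV) (hF : 0 ≤ F) (ha : 0 ≤ a) :
    cV * F * a ≤ mu / 2 * a ^ p + (cV ^ q * (p * mu) ^ (1 - q) / (q * 2 ^ (1 - q))) * F ^ q := by
  have hp0 : p ≠ 0 := by positivity
  have hp1 : p - 1 ≠ 0 := by nlinarith
  have hpq : p.HolderConjugate q := Real.holderConjugate_iff.mpr ⟨hp, by rw [hq]; field_simp; ring⟩
  have hqp : q / p = q - 1 := by rw [hq]; field_simp; ring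
  have hq0 : q ≠ 0 := hpq.symm.ne_zero
  have hc : (0:ℝ) < p * mu / 2 := by positivity
  set c : ℝ := p * mu / 2 with hcdef
  have key := Real.young_inequality_of_nonneg
    (a := c ^ (1/p) * a) (b := cV * F * c ^ (-(1/p)))
    (by positivity) (by positivity) hpq
  have hone : c ^ (1/p) * c ^ (-(1/p)) = 1 := by
    rw [← Real.rpow_add hc]; simp
  have e0 : (c ^ (1/p) * a) * (cV * F * c ^ (-(1/p))) = cV * F * a := by
    linear_combination (a * cV * F) * hone
  have e1 : (c ^ (1/p) * a) ^ p = c * a ^ p := by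
    rw [Real.mul_rpow (by positivity) ha, ← Real.rpow_mul hc.le, one_div,
      inv_mul_cancel₀ hp0, Real.rpow_one]
  have e2 : (cV * F * c ^ (-(1/p))) ^ q = cV ^ q * F ^ q * c ^ (1 - q) := by
    rw [Real.mul_rpow (by positivity) (by positivity),
      Real.mul_rpow hcV hF, ← Real.rpow_mul hc.le]
    congr 1
    rw [neg_mul, one_div, inv_mul_eq_div, hqp]
    ring
  have e3 : c ^ (1 - q) = (p * mu) ^ (1 - q) / 2 ^ (1 - q) := by
    rw [hcdef, Real.div_rpow (by positivity) (by norm_num)]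
  rw [e0, e1, e2, e3] at key
  have h2q : (0:ℝ) < (2:ℝ) ^ (1 - q) := by positivity
  calc cV * F * a ≤ c * a ^ p / p + cV ^ q * F ^ q * ((p * mu) ^ (1 - q) / 2 ^ (1 - q)) / q := key
    _ = mu / 2 * a ^ p + (cV ^ q * (p * mu) ^ (1 - q) / (q * 2 ^ (1 - q))) * F ^ q := by
        rw [hcdef]; field_simp

open scoped RealInnerProductSpace

/-- Single-step energy estimate for the sum splitting scheme. -/
theorem stmt_15
    {Vl H : Type*} [NormedAddCommGroup Vl] [NormedSpace ℝ Vl]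
    [NormedAddCommGroup H] [InnerProductSpace ℝ H]
    (j : Vl →L[ℝ] H) (hj : DenseRange j)
    (sv : Seminorm ℝ Vl) (cV : ℝ) (hcV : 0 < cV)
    (hnorm : ∀ v : Vl, ‖v‖ ≤ cV * (‖j v‖ + sv v))
    (p q lam mu : ℝ) (hp : 1 < p) (hq : q = p / (p - 1))
    (hlam : 0 ≤ lam) (hmu : 0 < mu)
    (A : Vl → StrongDual ℝ Vl)
    (hcoer : ∀ v : Vl, A v v + lam ≥ mu * (sv v) ^ p)
    (s : ℕ) (hs : 1 ≤ s) (k : ℝ) (hk : 0 < k)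
    (f : StrongDual ℝ Vl) (Uprev : H) (U : Vl)
    (hscheme : ∀ v : Vl, ⟪j U - Uprev, j v⟫ / k + (s : ℝ) * A U v = (s : ℝ) * f v) :
    ‖j U‖ ^ 2 - ‖Uprev‖ ^ 2 + ‖j U - Uprev‖ ^ 2 + k * s * mu * (sv U) ^ p
      ≤ 2 * k * s * cV * ‖f‖ * ‖j U‖
        + 2 * k * s * (cV ^ q * (p * mu) ^ (1 - q) / (q * 2 ^ (1 - q))) * ‖f‖ ^ q
        + 2 * k * s * lam := by
  have hs0 : (0:ℝ) < (s:ℝ) := by exact_mod_cast Nat.lt_of_lt_of_le Nat.zero_lt_one hs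
  have hks : (0:ℝ) < 2 * k * s := by positivity
  -- scheme tested with U
  have e1 := hscheme U
  have h2 : ⟪j U - Uprev, j U⟫ = k * ((s:ℝ) * f U - (s:ℝ) * A U U) := by
    field_simp at e1; linarith
  have inner_id : ‖j U‖ ^ 2 - ‖Uprev‖ ^ 2 + ‖j U - Uprev‖ ^ 2
      = 2 * ⟪j U - Uprev, j U⟫ := by
    have hn : ‖j U - Uprev‖ ^ 2 = ‖j U‖ ^ 2 - 2 * ⟪j U, Uprev⟫ + ‖Uprev‖ ^ 2 :=
      norm_sub_sq_real (j U) Uprev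
    have hi : ⟪j U - Uprev, j U⟫ = ‖j U‖ ^ 2 - ⟪j U, Uprev⟫ := by
      rw [inner_sub_left, real_inner_self_eq_norm_sq, real_inner_comm]
    linarith
  have key : ‖j U‖ ^ 2 - ‖Uprev‖ ^ 2 + ‖j U - Uprev‖ ^ 2 + 2 * k * s * A U U
      = 2 * k * s * f U := by
    rw [inner_id]; linear_combination 2 * h2
  -- coercivity
  have h1 : 2 * k * s * (mu * (sv U) ^ p - lam) ≤ 2 * k * s * A U U :=
    mul_le_mul_of_nonneg_left (by linarith [hcoer U]) hks.le
  -- duality bound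
  have hfU : f U ≤ cV * ‖f‖ * (‖j U‖ + sv U) := by
    calc f U ≤ ‖f‖ * ‖U‖ := le_trans (le_abs_self _) (f.le_opNorm U)
      _ ≤ ‖f‖ * (cV * (‖j U‖ + sv U)) :=
          mul_le_mul_of_nonneg_left (hnorm U) (norm_nonneg f)
      _ = cV * ‖f‖ * (‖j U‖ + sv U) := by ring
  have h2' : 2 * k * s * f U ≤ 2 * k * s * (cV * ‖f‖ * (‖j U‖ + sv U)) :=
    mul_le_mul_of_nonneg_left hfU hks.le
  have hyoung : cV * ‖f‖ * sv U ≤ mu / 2 * (sv U) ^ p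
      + (cV ^ q * (p * mu) ^ (1 - q) / (q * 2 ^ (1 - q))) * ‖f‖ ^ q :=
    myYoung hp hq hmu hcV.le (norm_nonneg f) (apply_nonneg sv U)
  have h3 : 2 * k * s * (cV * ‖f‖ * sv U) ≤ 2 * k * s * (mu / 2 * (sv U) ^ p
      + (cV ^ q * (p * mu) ^ (1 - q) / (q * 2 ^ (1 - q))) * ‖f‖ ^ q) :=
    mul_le_mul_of_nonneg_left hyoung hks.le
  nlinarith [key, h1, h2', h3]
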